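/- Let η = (1/r!) Σ_{g ∈ G} sgn(g|_{[r]}) g ∈ ℂ[T_n], where G is the maximal subgroup at the idempotent e_r. Then η is a primitive idempotent; in fact the algebra η ℂ[T_n] η is one-dimensional over ℂ. -/

import Mathlib

open Finset in
/-- The natural representation of the full transformation monoid `Function.End (Fin n)`
on `ℂ^n`, determined by `f · v_i = v_{f i}` on the standard basis. -/
noncomputable def natRep (n : ℕ) :
    Representation ℂ (Function.End (Fin n)) (Fin n → ℂ) where
  toFun f :=
    { toFun := fun x j => ∑ i, if f i = j then x i else 0
      map_add' := by
        intro x y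
        funext j
        simp only [Pi.add_apply]
        rw [← Finset.sum_add_distrib]
        congr 1; funext i; split <;> simp
      map_smul' := by
        intro c x
        funext j
        simp [Finset.mul_sum, apply_ite (fun t => c * t)] }
  map_one' := by
    refine LinearMap.ext fun x => funext fun j => ?_
    show (∑ i, if (1 : Function.End (Fin n)) i = j then x i else 0) = x j
    have h : ∀ i : Fin n, (1 : Function.End (Fin n)) i = i := fun _ => rfl
    simp only [h]
    rw [Finset.sum_ite_eq' Finset.univ j x]
    simp
  map_mul' := by
    intro f g
    refine LinearMap.ext fun x => funext fun j => ?_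
    show (∑ i, if f (g i) = j then x i else 0)
        = ∑ k, if f k = j then ∑ i, if g i = k then x i else 0 else 0
    have key : ∀ k, (if f k = j then ∑ i, if g i = k then x i else 0 else 0)
        = ∑ i, if g i = k then (if f k = j then x i else 0) else 0 := by
      intro k; split
      · rfl
      · simp
    rw [Finset.sum_congr rfl (fun k _ => key k), Finset.sum_comm]
    refine Finset.sum_congr rfl fun i _ => ?_
    rw [Finset.sum_ite_eq Finset.univ (g i) (fun k => if f k = j then x i else 0)]
    simp

lemma sum_natRep (n : ℕ) (f : Function.End (Fin n)) (x : Fin n → ℂ) :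
    ∑ j, natRep n f x j = ∑ i, x i := by
  show ∑ j, ∑ i, (if f i = j then x i else 0) = _
  rw [Finset.sum_comm]
  simp [Finset.sum_ite_eq' Finset.univ]

/-- The augmentation submodule `Aug(ℂ^n)` of the natural module: vectors whose
coordinates sum to zero. -/
noncomputable def Aug (n : ℕ) : Submodule ℂ (Fin n → ℂ) where
  carrier := {x | ∑ i, x i = 0}
  add_mem' := by intro a b ha hb; simp_all [Finset.sum_add_distrib]
  zero_mem' := by simp
  smul_mem' := by intro c a ha; simp_all [← Finset.mul_sum]

lemma natRep_mem_aug (n : ℕ) (f : Function.End (Fin n)) {x : Fin n → ℂ}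
    (hx : x ∈ Aug n) : natRep n f x ∈ Aug n := by
  have : ∑ j, natRep n f x j = 0 := by rw [sum_natRep]; exact hx
  exact this

/-- The representation of the full transformation monoid on the augmentation submodule. -/
noncomputable def augRep (n : ℕ) : Representation ℂ (Function.End (Fin n)) (Aug n) where
  toFun f := (natRep n f).restrict (p := Aug n) (q := Aug n) (fun _ hx => natRep_mem_aug n f hx)
  map_one' := by
    refine LinearMap.ext fun x => Subtype.ext ?_
    simp [LinearMap.restrict_apply]
  map_mul' := by
    intro f g
    refine LinearMap.ext fun x => Subtype.ext ?_
    simp [LinearMap.restrict_apply]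

lemma extAlg_map_mem {R M N : Type} [CommRing R] [AddCommGroup M] [Module R M]
    [AddCommGroup N] [Module R N] (r : ℕ) (f : M →ₗ[R] N) {x : ExteriorAlgebra R M}
    (hx : x ∈ ⋀[R]^r M) : ExteriorAlgebra.map f x ∈ ⋀[R]^r N := by
  rw [← ExteriorAlgebra.ιMulti_span_fixedDegree] at hx ⊢
  induction hx using Submodule.span_induction with
  | mem y hy =>
      obtain ⟨v, rfl⟩ := hy
      rw [ExteriorAlgebra.map_apply_ιMulti]
      exact Submodule.subset_span ⟨f ∘ v, rfl⟩
  | zero => simp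
  | add y z _ _ hy hz => rw [map_add]; exact Submodule.add_mem _ hy hz
  | smul c y _ hy => rw [map_smul]; exact Submodule.smul_mem _ c hy

/-- The linear map between `r`-th exterior powers induced by a linear map. -/
noncomputable def extMap {R M N : Type} [CommRing R] [AddCommGroup M] [Module R M]
    [AddCommGroup N] [Module R N] (r : ℕ) (f : M →ₗ[R] N) :
    ⋀[R]^r M →ₗ[R] ⋀[R]^r N :=
  (ExteriorAlgebra.map f).toLinearMap.restrict (p := ⋀[R]^r M) (q := ⋀[R]^r N)
    (fun _ hx => extAlg_map_mem r f hx)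

/-- The representation of the full transformation monoid on the `r`-th exterior power
of the natural module, by the diagonal action on wedge products. -/
noncomputable def extRep (n r : ℕ) :
    Representation ℂ (Function.End (Fin n)) (⋀[ℂ]^r (Fin n → ℂ)) where
  toFun f := extMap r (natRep n f)
  map_one' := by
    refine LinearMap.ext fun x => Subtype.ext ?_
    simp [extMap, LinearMap.restrict_apply, map_one, Module.End.one_eq_id,
      ExteriorAlgebra.map_id]
  map_mul' := by
    intro f g
    refine LinearMap.ext fun x => Subtype.ext ?_
    simp only [extMap, LinearMap.restrict_apply, map_mul, Module.End.mul_eq_comp,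
      ← ExteriorAlgebra.map_comp_map]
    rfl

set_option synthInstance.maxHeartbeats 1000000 in
/-- The representation of the full transformation monoid on the `r`-th exterior power
of the augmentation submodule. -/
noncomputable def extAugRep (n r : ℕ) :
    Representation ℂ (Function.End (Fin n)) (⋀[ℂ]^r ↥(Aug n)) where
  toFun f := extMap r (augRep n f)
  map_one' := by
    refine LinearMap.ext fun x => Subtype.ext ?_
    simp [extMap, LinearMap.restrict_apply, map_one, Module.End.one_eq_id,
      ExteriorAlgebra.map_id]
  map_mul' := by
    intro f g
    refine LinearMap.ext fun x => Subtype.ext ?_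
    simp only [extMap, LinearMap.restrict_apply, map_mul, Module.End.mul_eq_comp,
      ← ExteriorAlgebra.map_comp_map]
    rfl

/-- The idempotent `e_m ∈ T_n` fixing the first `m` points and sending all other
points to the first point. -/
def eIdem (n m : ℕ) : Function.End (Fin n) :=
  fun i => if h : (i : ℕ) < m then i else ⟨0, i.pos⟩

/-- The embedding of the symmetric group `S_r` into `T_n` as the maximal subgroup
at the idempotent `eIdem n r` (elements `g` with `e g e = g` invertible in `e T_n e`). -/
def permEmbed (n r : ℕ) (hr : 1 ≤ r) (hrn : r ≤ n) (σ : Equiv.Perm (Fin r)) :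
    Function.End (Fin n) :=
  fun i => Fin.castLE hrn (σ (if hi : (i : ℕ) < r then ⟨i, hi⟩ else ⟨0, hr⟩))

/-- The idempotent `η = (1/r!) ∑_{g ∈ G} sgn(g|_{[r]}) g` of the monoid algebra,
where `G ≅ S_r` is the maximal subgroup at `eIdem n r`. -/
noncomputable def eta (n r : ℕ) (hr : 1 ≤ r) (hrn : r ≤ n) :
    MonoidAlgebra ℂ (Function.End (Fin n)) :=
  (r.factorial : ℂ)⁻¹ • ∑ σ : Equiv.Perm (Fin r),
    MonoidAlgebra.single (permEmbed n r hr hrn σ) ((Equiv.Perm.sign σ : ℤ) : ℂ)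

/-- A permutation of `Fin m`, viewed as an element of the transformation monoid. -/
def permToEnd (m : ℕ) : Equiv.Perm (Fin m) →* Function.End (Fin m) where
  toFun σ := ⇑σ
  map_one' := rfl
  map_mul' := fun _ _ => rfl

/-- The wedge product of a family of `r` vectors, as an element of the `r`-th
exterior power. -/
noncomputable def wedge {M : Type} [AddCommGroup M] [Module ℂ M] (r : ℕ) (v : Fin r → M) :
    ⋀[ℂ]^r M :=
  ⟨ExteriorAlgebra.ιMulti ℂ r v, ExteriorAlgebra.ιMulti_range ℂ r ⟨v, rfl⟩⟩

/-- The basis `w_1, …, w_n` of `ℂ^n`: `w_i = v_i - v_n` for `i < n` and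
`w_n = v_1 + ⋯ + v_n`. -/
noncomputable def wBasis (n : ℕ) : Fin n → (Fin n → ℂ) :=
  fun i => if h : (i : ℕ) < n - 1
    then Pi.single i 1 - Pi.single (⟨n - 1, by omega⟩ : Fin n) 1
    else ∑ j, Pi.single j 1

lemma wBasis_mem_aug (n : ℕ) (i : Fin n) (h : (i : ℕ) < n - 1) : wBasis n i ∈ Aug n := by
  show ∑ j, wBasis n i j = 0
  simp [wBasis, h, Finset.sum_sub_distrib, Finset.sum_pi_single]

/-- The vectors `w_i = v_i - v_n` (for `i < n`) as elements of the augmentation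
submodule; junk value `0` otherwise. -/
noncomputable def wAug (n : ℕ) : Fin n → ↥(Aug n) :=
  fun i => if h : (i : ℕ) < n - 1 then ⟨wBasis n i, wBasis_mem_aug n i h⟩ else 0

/-- The trivial representation of the full transformation monoid on `ℂ`. -/
noncomputable def trivRep (n : ℕ) : Representation ℂ (Function.End (Fin n)) ℂ := 1

/-- `projDimLE R M k` : the `R`-module `M` admits a projective resolution of length
at most `k`, i.e. has projective dimension at most `k`. -/
def projDimLE (R : Type) [Ring R] (M : Type) [AddCommMonoid M] [Module R M] (k : ℕ) : Prop :=
  ∃ (P : ℕ → ModuleCat.{0} R) (d : (i : ℕ) → (P (i + 1) →ₗ[R] P i)) (π : P 0 →ₗ[R] M),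
    (∀ i, Module.Projective R (P i)) ∧
    Function.Surjective π ∧
    LinearMap.ker π = LinearMap.range (d 0) ∧
    (∀ i, LinearMap.ker (d i) = LinearMap.range (d (i + 1))) ∧
    (∀ i, k < i → Subsingleton (P i))

open Classical in
/-- The sign character of `S_n`, extended by zero to all of `T_n`. -/
noncomputable def sgnExt (n : ℕ) (f : Function.End (Fin n)) : ℂ :=
  if h : Function.Bijective f then ((Equiv.Perm.sign (Equiv.ofBijective f h) : ℤ) : ℂ) else 0

namespace EtaAux

variable (n r : ℕ) (hr : 1 ≤ r) (hrn : r ≤ n)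

/-- Projection `Fin n → Fin r`. -/
def projR (i : Fin n) : Fin r := if hi : (i : ℕ) < r then ⟨i, hi⟩ else ⟨0, hr⟩

lemma projR_castLE (x : Fin r) : projR n r hr (Fin.castLE hrn x) = x := by
  simp [projR, x.isLt]

lemma permEmbed_apply (σ : Equiv.Perm (Fin r)) (i : Fin n) :
    permEmbed n r hr hrn σ i = Fin.castLE hrn (σ (projR n r hr i)) := rfl

lemma pe_mul (σ τ : Equiv.Perm (Fin r)) :
    permEmbed n r hr hrn (σ * τ) = permEmbed n r hr hrn σ * permEmbed n r hr hrn τ := by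
  funext i
  show Fin.castLE hrn (σ (τ (projR n r hr i)))
      = permEmbed n r hr hrn σ (permEmbed n r hr hrn τ i)
  rw [permEmbed_apply, permEmbed_apply, projR_castLE]

lemma pe_inj : Function.Injective (permEmbed n r hr hrn) := by
  intro σ τ h
  ext x
  have := congrFun h (Fin.castLE hrn x)
  rw [permEmbed_apply, permEmbed_apply, projR_castLE] at this
  exact congrArg Fin.val (Fin.castLE_injective hrn this)

/-- sign as complex number. -/
noncomputable def s (σ : Equiv.Perm (Fin r)) : ℂ := ((Equiv.Perm.sign σ : ℤ) : ℂ)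

lemma s_mul (σ τ : Equiv.Perm (Fin r)) : s r (σ * τ) = s r σ * s r τ := by
  simp [s]

lemma s_sq (σ : Equiv.Perm (Fin r)) : s r σ * s r σ = 1 := by
  simp only [s, ← Int.cast_mul, ← Units.val_mul, Int.units_mul_self, Units.val_one,
    Int.cast_one]

noncomputable def S : MonoidAlgebra ℂ (Function.End (Fin n)) :=
  ∑ σ : Equiv.Perm (Fin r), MonoidAlgebra.single (permEmbed n r hr hrn σ) (s r σ)

lemma eta_eq : eta n r hr hrn = (r.factorial : ℂ)⁻¹ • S n r hr hrn := rfl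

open MonoidAlgebra

lemma S_mul_g (ρ : Equiv.Perm (Fin r)) :
    S n r hr hrn * single (permEmbed n r hr hrn ρ) 1 = ∑ σ : Equiv.Perm (Fin r),
      single (permEmbed n r hr hrn (σ * ρ)) (s r σ) := by
  rw [S, Finset.sum_mul]
  refine Finset.sum_congr rfl fun σ _ => ?_
  rw [single_mul_single, mul_one, pe_mul]

lemma g_mul_S (ρ : Equiv.Perm (Fin r)) :
    single (permEmbed n r hr hrn ρ) (1 : ℂ) * S n r hr hrn = ∑ σ : Equiv.Perm (Fin r),
      single (permEmbed n r hr hrn (ρ * σ)) (s r σ) := by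
  rw [S, Finset.mul_sum]
  refine Finset.sum_congr rfl fun σ _ => ?_
  rw [single_mul_single, one_mul, pe_mul]

lemma S_mul_e : S n r hr hrn * single (permEmbed n r hr hrn 1) 1 = S n r hr hrn := by
  rw [S_mul_g]; simp [S]

lemma e_mul_S : single (permEmbed n r hr hrn 1) (1 : ℂ) * S n r hr hrn = S n r hr hrn := by
  rw [g_mul_S]; simp [S]

lemma caseA (ρ : Equiv.Perm (Fin r)) :
    S n r hr hrn * single (permEmbed n r hr hrn ρ) 1 * S n r hr hrn
      = (s r ρ * (r.factorial : ℂ)) • S n r hr hrn := by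
  rw [S_mul_g, Finset.sum_mul]
  have inner : ∀ σ : Equiv.Perm (Fin r),
      single (permEmbed n r hr hrn (σ * ρ)) (s r σ) * S n r hr hrn
        = s r ρ • S n r hr hrn := by
    intro σ
    have h1 : single (permEmbed n r hr hrn (σ * ρ)) (s r σ)
        = s r σ • single (permEmbed n r hr hrn (σ * ρ)) (1 : ℂ) := by
      rw [smul_single', mul_one]
    rw [h1, smul_mul_assoc, g_mul_S]
    have reindex : ∑ τ : Equiv.Perm (Fin r),
        single (permEmbed n r hr hrn (σ * ρ * τ)) (s r τ)
        = ∑ μ : Equiv.Perm (Fin r),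
            single (permEmbed n r hr hrn μ) (s r ((σ * ρ)⁻¹ * μ)) := by
      refine Fintype.sum_bijective (fun τ => (σ * ρ) * τ)
        (Group.mulLeft_bijective (σ * ρ)) _ _ fun τ => ?_
      rw [inv_mul_cancel_left]
    rw [reindex]
    have : ∀ μ : Equiv.Perm (Fin r), s r ((σ * ρ)⁻¹ * μ) = s r σ * s r ρ * s r μ := by
      intro μ
      rw [s_mul, mul_inv_rev, s_mul]
      have hsinv : ∀ π : Equiv.Perm (Fin r), s r π⁻¹ = s r π := by
        intro π; simp [s]
      rw [hsinv, hsinv]; ring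
    simp only [this]
    rw [Finset.smul_sum, S, Finset.smul_sum]
    refine Finset.sum_congr rfl fun μ _ => ?_
    rw [smul_single', smul_single']
    congr 1
    have := s_sq r σ
    ring_nf
    rw [sq, this, one_mul]
  rw [Finset.sum_congr rfl fun σ _ => inner σ]
  rw [Finset.sum_const, Finset.card_univ, Fintype.card_perm, Fintype.card_fin,
    ← Nat.cast_smul_eq_nsmul ℂ, smul_smul, mul_comm]



lemma caseB (h : Function.End (Fin n)) (i j : Fin r) (hij : i ≠ j)
    (hh : h * permEmbed n r hr hrn (Equiv.swap i j) = h) :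
    S n r hr hrn * single h 1 * S n r hr hrn = 0 := by
  have step1 : S n r hr hrn * single h 1 = ∑ σ : Equiv.Perm (Fin r),
      single (permEmbed n r hr hrn σ * h) (s r σ) := by
    rw [S, Finset.sum_mul]
    exact Finset.sum_congr rfl fun σ _ => by rw [single_mul_single, mul_one]
  rw [step1, Finset.sum_mul]
  refine Finset.sum_eq_zero fun σ _ => ?_
  set X := single (permEmbed n r hr hrn σ * h) (s r σ) * S n r hr hrn with hXdef
  have hXs : X = ∑ τ : Equiv.Perm (Fin r),
      single (permEmbed n r hr hrn σ * h * permEmbed n r hr hrn τ) (s r σ * s r τ) := by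
    rw [hXdef, S, Finset.mul_sum]
    exact Finset.sum_congr rfl fun τ _ => by rw [single_mul_single]
  have hswap : ∀ τ : Equiv.Perm (Fin r),
      permEmbed n r hr hrn σ * h * permEmbed n r hr hrn (Equiv.swap i j * τ)
        = permEmbed n r hr hrn σ * h * permEmbed n r hr hrn τ := by
    intro τ
    rw [pe_mul, ← mul_assoc, mul_assoc (permEmbed n r hr hrn σ) h, hh]
  have hsign : ∀ τ : Equiv.Perm (Fin r), s r (Equiv.swap i j * τ) = -(s r τ) := by
    intro τ
    rw [s_mul]
    have : s r (Equiv.swap i j) = -1 := by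
      simp [s, Equiv.Perm.sign_swap hij]
    rw [this]; ring
  have hre : X = ∑ τ : Equiv.Perm (Fin r),
      single (permEmbed n r hr hrn σ * h * permEmbed n r hr hrn (Equiv.swap i j * τ))
        (s r σ * s r (Equiv.swap i j * τ)) :=
    hXs.trans (Fintype.sum_bijective (fun τ => Equiv.swap i j * τ)
      (Group.mulLeft_bijective (Equiv.swap i j)) _ _ (fun τ => rfl)).symm
  have hneg : X = -X := by
    calc X = ∑ τ : Equiv.Perm (Fin r),
        single (permEmbed n r hr hrn σ * h * permEmbed n r hr hrn (Equiv.swap i j * τ))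
          (s r σ * s r (Equiv.swap i j * τ)) := hre
    _ = ∑ τ : Equiv.Perm (Fin r),
        -single (permEmbed n r hr hrn σ * h * permEmbed n r hr hrn τ) (s r σ * s r τ) := by
        refine Finset.sum_congr rfl fun τ _ => ?_
        rw [hswap, hsign, show s r σ * -(s r τ) = (-1 : ℂ) * (s r σ * s r τ) by ring,
          ← smul_single', neg_one_smul]
    _ = -X := by rw [hXs, ← Finset.sum_neg_distrib]
  have h2 : X + X = 0 := by nth_rewrite 2 [hneg]; rw [add_neg_cancel]
  have h2' : (2 : ℂ) • X = 0 := by rw [two_smul]; exact h2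
  rcases smul_eq_zero.mp h2' with h | h
  · exact absurd h two_ne_zero
  · exact h

lemma h_apply (f : Function.End (Fin n)) (k : Fin n) :
    (permEmbed n r hr hrn 1 * f * permEmbed n r hr hrn 1) k
      = Fin.castLE hrn (projR n r hr (f (Fin.castLE hrn (projR n r hr k)))) := rfl

lemma corner_single (f : Function.End (Fin n)) :
    ∃ c : ℂ, S n r hr hrn * single f 1 * S n r hr hrn = c • S n r hr hrn := by
  set e := permEmbed n r hr hrn 1 with he
  set h := e * f * e with hdef
  have hsingle : single h (1 : ℂ) = single e 1 * single f 1 * single e 1 := by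
    rw [single_mul_single, single_mul_single, mul_one, mul_one]
  have hS : S n r hr hrn * single f 1 * S n r hr hrn
      = S n r hr hrn * single h 1 * S n r hr hrn := by
    rw [hsingle]
    simp only [← mul_assoc]
    rw [S_mul_e, mul_assoc (S n r hr hrn * single f 1), e_mul_S]
  set φ := fun x : Fin r => projR n r hr (f (Fin.castLE hrn x)) with hφdef
  by_cases hφ : Function.Injective φ
  · have hbij : Function.Bijective φ := Finite.injective_iff_bijective.mp hφ
    have hρ : h = permEmbed n r hr hrn (Equiv.ofBijective φ hbij) := by
      funext k
      rw [hdef, h_apply, permEmbed_apply, Equiv.ofBijective_apply]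
    exact ⟨s r (Equiv.ofBijective φ hbij) * (r.factorial : ℂ),
      by rw [hS, hρ, caseA]⟩
  · obtain ⟨i, j, hfij, hij⟩ := Function.not_injective_iff.mp hφ
    have hφswap : ∀ z : Fin r, φ (Equiv.swap i j z) = φ z := by
      intro z
      rcases eq_or_ne z i with rfl | hzi
      · rw [Equiv.swap_apply_left, hfij]
      rcases eq_or_ne z j with rfl | hzj
      · rw [Equiv.swap_apply_right, hfij]
      · rw [Equiv.swap_apply_of_ne_of_ne hzi hzj]
    have hh : h * permEmbed n r hr hrn (Equiv.swap i j) = h := by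
      funext k
      show h (permEmbed n r hr hrn (Equiv.swap i j) k) = h k
      rw [hdef, h_apply, h_apply, permEmbed_apply, projR_castLE]
      exact congrArg (Fin.castLE hrn) (hφswap (projR n r hr k))
    exact ⟨0, by rw [hS, caseB n r hr hrn h i j hij hh, zero_smul]⟩

lemma rfact_ne : (r.factorial : ℂ) ≠ 0 := by
  exact_mod_cast Nat.cast_ne_zero.mpr r.factorial_ne_zero

lemma S_mul_S : S n r hr hrn * S n r hr hrn = (r.factorial : ℂ) • S n r hr hrn := by
  have h := caseA n r hr hrn 1
  rw [S_mul_e] at h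
  have h1 : s r (1 : Equiv.Perm (Fin r)) = 1 := by simp [s]
  rw [h1, one_mul] at h
  exact h

lemma eta_idem : eta n r hr hrn * eta n r hr hrn = eta n r hr hrn := by
  rw [eta_eq, smul_mul_assoc, mul_smul_comm, S_mul_S, smul_smul, smul_smul]
  congr 1
  field_simp

lemma S_eq : S n r hr hrn = (r.factorial : ℂ) • eta n r hr hrn := by
  rw [eta_eq, smul_smul, mul_inv_cancel₀ (rfact_ne r), one_smul]

lemma eta_apply_one : (eta n r hr hrn).coeff (permEmbed n r hr hrn 1) = (r.factorial : ℂ)⁻¹ := by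
  classical
  rw [eta_eq, S]
  rw [MonoidAlgebra.coeff_smul_apply, MonoidAlgebra.coeff_sum, Finsupp.finset_sum_apply]
  have : ∀ σ : Equiv.Perm (Fin r),
      (single (permEmbed n r hr hrn σ) (s r σ) : MonoidAlgebra ℂ (Function.End (Fin n))).coeff
        (permEmbed n r hr hrn 1) = if σ = 1 then s r σ else 0 := by
    intro σ
    rw [MonoidAlgebra.coeff_single, Finsupp.single_apply]
    by_cases hσ : σ = 1
    · subst hσ; simp
    · rw [if_neg (fun hc => hσ (pe_inj n r hr hrn hc)), if_neg hσ]
  rw [Finset.sum_congr rfl fun σ _ => this σ, Finset.sum_ite_eq' Finset.univ 1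
    (fun σ => s r σ)]
  simp [s]

lemma eta_ne_zero : eta n r hr hrn ≠ 0 := by
  intro h0
  have := eta_apply_one n r hr hrn
  rw [h0] at this
  exact inv_ne_zero (rfact_ne r) (by simpa using this.symm)

lemma eta_corner (x : MonoidAlgebra ℂ (Function.End (Fin n))) :
    eta n r hr hrn * x * eta n r hr hrn ∈ Submodule.span ℂ {eta n r hr hrn} := by
  induction x using MonoidAlgebra.induction_on with
  | of f =>
      obtain ⟨c, hc⟩ := corner_single n r hr hrn f
      have h2 : eta n r hr hrn * MonoidAlgebra.of ℂ (Function.End (Fin n)) f * eta n r hr hrn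
          = ((r.factorial : ℂ)⁻¹ * ((r.factorial : ℂ)⁻¹ * c)) • S n r hr hrn := by
        rw [eta_eq, MonoidAlgebra.of_apply, smul_mul_assoc, smul_mul_assoc,
          mul_smul_comm, hc, smul_smul, smul_smul, mul_assoc]
      rw [h2, S_eq, smul_smul]
      exact Submodule.smul_mem _ _ (Submodule.mem_span_singleton_self _)
  | add x y hx hy =>
      rw [mul_add, add_mul]
      exact Submodule.add_mem _ hx hy
  | smul c x hx =>
      rw [mul_smul_comm, smul_mul_assoc]
      exact Submodule.smul_mem _ _ hx

end EtaAux

/-- `η = (1/r!) ∑_{g ∈ G} sgn(g|_{[r]}) g ∈ ℂ[T_n]`, where `G ≅ S_r` is the maximal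
subgroup at the idempotent `e_r`, is a primitive idempotent: it is idempotent, it
admits no non-trivial decomposition as a sum of orthogonal idempotents, and in fact
the corner algebra `η ℂ[T_n] η` is one-dimensional over `ℂ`. -/
theorem eta_primitive_idempotent (n r : ℕ) (hr : 1 ≤ r) (hrn : r ≤ n) :
    IsIdempotentElem (eta n r hr hrn) ∧
    (∀ a b : MonoidAlgebra ℂ (Function.End (Fin n)),
      IsIdempotentElem a → IsIdempotentElem b → a * b = 0 → b * a = 0 →
      a + b = eta n r hr hrn → a = 0 ∨ b = 0) ∧
    Module.finrank ℂ
      ↥(LinearMap.range ((LinearMap.mulLeft ℂ (eta n r hr hrn)).comp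
          (LinearMap.mulRight ℂ (eta n r hr hrn)))) = 1 := by
  have hidem : IsIdempotentElem (eta n r hr hrn) := EtaAux.eta_idem n r hr hrn
  have hne := EtaAux.eta_ne_zero n r hr hrn
  have hcorner := EtaAux.eta_corner n r hr hrn
  have hL : ∀ x, ((LinearMap.mulLeft ℂ (eta n r hr hrn)).comp
      (LinearMap.mulRight ℂ (eta n r hr hrn))) x = eta n r hr hrn * x * eta n r hr hrn := by
    intro x
    rw [LinearMap.comp_apply, LinearMap.mulLeft_apply, LinearMap.mulRight_apply, mul_assoc]
  refine ⟨hidem, ?_, ?_⟩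
  · intro a b ha hb hab hba hsum
    have haη : a * eta n r hr hrn = a := by rw [← hsum, mul_add, ha, hab, add_zero]
    have hηa : eta n r hr hrn * a = a := by rw [← hsum, add_mul, ha, hba, add_zero]
    have hmem : a ∈ Submodule.span ℂ {eta n r hr hrn} := by
      have h3 : a = eta n r hr hrn * a * eta n r hr hrn := by rw [hηa, haη]
      rw [h3]; exact hcorner a
    obtain ⟨c, hc⟩ := Submodule.mem_span_singleton.mp hmem
    have hcc : c * c = c := by
      have h1 : (c * c) • eta n r hr hrn = c • eta n r hr hrn := by
        calc (c * c) • eta n r hr hrn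
            = (c • eta n r hr hrn) * (c • eta n r hr hrn) := by
              rw [smul_mul_assoc, mul_smul_comm, smul_smul, hidem]
          _ = a * a := by rw [hc]
          _ = a := ha
          _ = c • eta n r hr hrn := hc.symm
      have h2 : (c * c - c) • eta n r hr hrn = 0 := by rw [sub_smul, h1, sub_self]
      rcases smul_eq_zero.mp h2 with h | h
      · exact sub_eq_zero.mp h
      · exact absurd h hne
    have hfac : c * (c - 1) = 0 := by linear_combination hcc
    rcases mul_eq_zero.mp hfac with h0 | h1'
    · left; rw [← hc, h0, zero_smul]
    · right
      have h1 : c = 1 := by linear_combination h1'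
      have haeta : a = eta n r hr hrn := by rw [← hc, h1, one_smul]
      have hb0 : b = eta n r hr hrn - a := eq_sub_of_add_eq' hsum
      rw [hb0, haeta, sub_self]
  · have hrange : LinearMap.range ((LinearMap.mulLeft ℂ (eta n r hr hrn)).comp
        (LinearMap.mulRight ℂ (eta n r hr hrn))) = Submodule.span ℂ {eta n r hr hrn} := by
      apply le_antisymm
      · rintro x ⟨y, rfl⟩
        rw [hL]; exact hcorner y
      · rw [Submodule.span_le]
        intro x hx
        rw [Set.mem_singleton_iff] at hx
        subst hx
        exact LinearMap.mem_range.mpr ⟨eta n r hr hrn, by rw [hL, hidem, hidem]⟩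
    rw [hrange]
    exact finrank_span_singleton hne
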